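/- Every red/blue/purple colouring R ∪ B ∪ P of K_8 in which the purple graph P is a matching with at least 3 edges contains a clique on 3 vertices in R ∪ P or a clique on 4 vertices in B ∪ P; moreover, there exists a red/blue/purple colouring R ∪ B ∪ P of K_8 in which P is a matching with exactly 2 edges, R ∪ P contains no clique on 3 vertices, and B ∪ P contains no clique on 4 vertices. -/

import Mathlib

set_option maxHeartbeats 4000000
set_option maxRecDepth 100000



/-- The independence number of a graph: the clique number of its complement. -/
noncomputable def indepNumber {V : Type*} (G : SimpleGraph V) : ℕ :=
  Gᶜ.cliqueNum

/-- The Ramsey–Turán number `RT s x n`: the maximum number of edges of an `n`-vertex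
`Kₛ`-free graph whose independence number is `< x`. -/
noncomputable def RT (s : ℕ) (x : ℝ) (n : ℕ) : ℕ :=
  sSup {m | ∃ G : SimpleGraph (Fin n),
    G.CliqueFree s ∧ (indepNumber G : ℝ) < x ∧ G.edgeSet.ncard = m}

/-- `R`, `B`, `P` form a red/blue/purple colouring of `K_n`: a partition of the
edge set of the complete graph into three graphs. -/
def IsRBP {n : ℕ} (R B P : SimpleGraph (Fin n)) : Prop :=
  R ⊔ B ⊔ P = ⊤ ∧ Disjoint R B ∧ Disjoint R P ∧ Disjoint B P

/-- The colouring is `(s,t)`-free: `R ⊔ P` has no `s`-clique and `B ⊔ P` has no `t`-clique. -/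
def IsSTFree {n : ℕ} (R B P : SimpleGraph (Fin n)) (s t : ℕ) : Prop :=
  (R ⊔ P).CliqueFree s ∧ (B ⊔ P).CliqueFree t

/-- The inverse Ramsey number: minimum independence number of an `n`-vertex `Kₛ`-free graph. -/
noncomputable def invRamsey (s n : ℕ) : ℕ :=
  sInf {a | ∃ G : SimpleGraph (Fin n), G.CliqueFree s ∧ indepNumber G = a}

/-- The Ramsey number `R(s,t)`. -/
noncomputable def ramseyNum (s t : ℕ) : ℕ :=
  sInf {n | ∀ G : SimpleGraph (Fin n), ¬ G.CliqueFree s ∨ ¬ Gᶜ.CliqueFree t}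

/-- The graph `P` is a matching: every vertex has at most one neighbour. -/
def IsMatchingGraph {n : ℕ} (P : SimpleGraph (Fin n)) : Prop :=
  ∀ v w w' : Fin n, P.Adj v w → P.Adj v w' → w = w'


open SimpleGraph Finset


open SimpleGraph Finset

instance {V : Type*} [Fintype V] [DecidableEq V] (G : SimpleGraph V) [DecidableRel G.Adj]
    (n : ℕ) : Decidable (G.CliqueFree n) :=
  inferInstanceAs (Decidable (∀ t : Finset V, ¬ G.IsNClique n t))

lemma notCF3 {V : Type*} [DecidableEq V] {G : SimpleGraph V} {a b c : V}
    (hab : G.Adj a b) (hac : G.Adj a c) (hbc : G.Adj b c) : ¬ G.CliqueFree 3 :=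
  fun h => h {a,b,c} (is3Clique_triple_iff.mpr ⟨hab, hac, hbc⟩)

lemma notCF4 {V : Type*} [DecidableEq V] {G : SimpleGraph V} {a b c d : V}
    (hab : G.Adj a b) (hac : G.Adj a c) (had : G.Adj a d)
    (hbc : G.Adj b c) (hbd : G.Adj b d) (hcd : G.Adj c d) :
    ¬ G.CliqueFree 4 := by
  intro h
  refine h {a,b,c,d} ⟨?_, ?_⟩
  · intro x hx y hy hne
    simp only [Finset.coe_insert, Set.mem_insert_iff, Finset.coe_singleton,
      Set.mem_singleton_iff] at hx hy
    rcases hx with rfl|rfl|rfl|rfl <;> rcases hy with rfl|rfl|rfl|rfl <;>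
      first
        | exact absurd rfl hne
        | assumption
        | exact hab.symm | exact hac.symm | exact had.symm
        | exact hbc.symm | exact hbd.symm | exact hcd.symm
  · have ha : a ∉ ({b,c,d} : Finset V) := by simp [hab.ne, hac.ne, had.ne]
    have hb : b ∉ ({c,d} : Finset V) := by simp [hbc.ne, hbd.ne]
    have hc : c ∉ ({d} : Finset V) := by simp [hcd.ne]
    rw [card_insert_of_notMem ha, card_insert_of_notMem hb, card_insert_of_notMem hc,
      card_singleton]

lemma triple_nonadj {V : Type*} [DecidableEq V] {G : SimpleGraph V} (h3 : G.CliqueFree 3)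
    {t : Finset V} (ht : t.card = 3) : ∃ x ∈ t, ∃ y ∈ t, x ≠ y ∧ ¬ G.Adj x y := by
  by_contra h
  push_neg at h
  exact h3 t ⟨fun x hx y hy hne => h x (Finset.mem_coe.mp hx) y (Finset.mem_coe.mp hy) hne, ht⟩

lemma deg_le_three (G : SimpleGraph (Fin 8)) [DecidableRel G.Adj]
    (h3 : G.CliqueFree 3) (h4 : Gᶜ.CliqueFree 4) (v : Fin 8) : G.degree v ≤ 3 := by
  by_contra hdeg
  push_neg at hdeg
  obtain ⟨t, hts, htc⟩ := Finset.exists_subset_card_eq (hdeg : 4 ≤ (G.neighborFinset v).card)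
  refine h4 t ⟨?_, htc⟩
  intro x hx y hy hne
  have hvx : G.Adj v x := (G.mem_neighborFinset v x).mp (hts (Finset.mem_coe.mp hx))
  have hvy : G.Adj v y := (G.mem_neighborFinset v y).mp (hts (Finset.mem_coe.mp hy))
  exact (G.compl_adj x y).mpr ⟨hne, fun hadj => notCF3 hvx hvy hadj h3⟩

lemma two_le_deg (G : SimpleGraph (Fin 8)) [DecidableRel G.Adj]
    (h3 : G.CliqueFree 3) (h4 : Gᶜ.CliqueFree 4) (v : Fin 8) : 2 ≤ G.degree v := by
  by_contra hdeg
  push_neg at hdeg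
  set s : Finset (Fin 8) := univ \ insert v (G.neighborFinset v) with hs
  have hnv : ∀ x ∈ s, x ≠ v ∧ ¬ G.Adj v x := by
    intro x hx
    rw [hs, Finset.mem_sdiff, Finset.mem_insert, SimpleGraph.mem_neighborFinset] at hx
    push_neg at hx
    exact ⟨hx.2.1, hx.2.2⟩
  have cV : ∀ p ∈ s, Gᶜ.Adj v p := fun p hp =>
    (G.compl_adj v p).mpr ⟨fun h => (hnv p hp).1 h.symm, (hnv p hp).2⟩
  have hscard : 6 ≤ s.card := by
    have h1 : (insert v (G.neighborFinset v)).card ≤ 2 :=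
      le_trans (Finset.card_insert_le _ _) (by
        have : (G.neighborFinset v).card ≤ 1 := by
          have := hdeg; unfold SimpleGraph.degree at this; omega
        omega)
    rw [hs, Finset.card_sdiff_of_subset (Finset.subset_univ _)]
    simp only [Finset.card_univ, Fintype.card_fin]
    omega
  obtain ⟨u, hu⟩ : s.Nonempty := Finset.card_pos.mp (by omega)
  by_cases hcase : 3 ≤ ((G.neighborFinset u) ∩ s).card
  · obtain ⟨t, hts, htc⟩ := Finset.exists_subset_card_eq hcase
    obtain ⟨x, y, z, hxy, hxz, hyz, hteq⟩ := Finset.card_eq_three.mp htc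
    have hmem : ∀ w ∈ t, G.Adj u w ∧ w ∈ s := by
      intro w hw
      have := hts hw
      rw [Finset.mem_inter, SimpleGraph.mem_neighborFinset] at this
      exact this
    have hx' := hmem x (by rw [hteq]; simp)
    have hy' := hmem y (by rw [hteq]; simp)
    have hz' := hmem z (by rw [hteq]; simp)
    have cA : ∀ p q : Fin 8, G.Adj u p → G.Adj u q → p ≠ q → Gᶜ.Adj p q := fun p q hp hq hne =>
      (G.compl_adj p q).mpr ⟨hne, fun h => notCF3 hp hq h h3⟩
    exact notCF4 (cV x hx'.2) (cV y hy'.2) (cV z hz'.2)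
      (cA x y hx'.1 hy'.1 hxy) (cA x z hx'.1 hz'.1 hxz) (cA y z hy'.1 hz'.1 hyz) h4
  · push_neg at hcase
    set m : Finset (Fin 8) := (s \ G.neighborFinset u).erase u with hm
    have hmcard : 3 ≤ m.card := by
      have h1 := Finset.card_sdiff_add_card_inter s (G.neighborFinset u)
      have h2 : (G.neighborFinset u ∩ s).card = (s ∩ G.neighborFinset u).card := by
        rw [Finset.inter_comm]
      have h4' := Finset.pred_card_le_card_erase (s := s \ G.neighborFinset u) (a := u)
      rw [hm]; omega
    obtain ⟨t, hts, htc⟩ := Finset.exists_subset_card_eq hmcard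
    obtain ⟨x, hxt, y, hyt, hxy, hnadj⟩ := triple_nonadj h3 htc
    have hmem : ∀ w ∈ t, w ≠ u ∧ w ∈ s ∧ ¬ G.Adj u w := by
      intro w hw
      have := hts hw
      rw [hm, Finset.mem_erase, Finset.mem_sdiff, SimpleGraph.mem_neighborFinset] at this
      exact ⟨this.1, this.2.1, this.2.2⟩
    have hx' := hmem x hxt
    have hy' := hmem y hyt
    have cU : ∀ p : Fin 8, p ≠ u → ¬ G.Adj u p → Gᶜ.Adj u p := fun p h1 h2 =>
      (G.compl_adj u p).mpr ⟨fun h => h1 h.symm, h2⟩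
    exact notCF4 (cV u hu) (cV x hx'.2.1) (cV y hy'.2.1)
      (cU x hx'.1 hx'.2.2) (cU y hy'.1 hy'.2.2)
      ((G.compl_adj x y).mpr ⟨hxy, hnadj⟩) h4

lemma ten_le_edges (G : SimpleGraph (Fin 8)) [DecidableRel G.Adj]
    (h3 : G.CliqueFree 3) (h4 : Gᶜ.CliqueFree 4) : 10 ≤ G.edgeFinset.card := by
  have hsum := G.sum_degrees_eq_twice_card_edges
  by_cases hall : ∀ v, 3 ≤ G.degree v
  · have h24 : (24:ℕ) ≤ ∑ v, G.degree v := by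
      calc (24:ℕ) = ∑ _v : Fin 8, 3 := by simp
      _ ≤ _ := Finset.sum_le_sum (fun v _ => hall v)
    omega
  · push_neg at hall
    obtain ⟨w, hw⟩ := hall
    have hw2 : G.degree w = 2 := le_antisymm (by omega) (two_le_deg G h3 h4 w)
    obtain ⟨a, b, hab, hN⟩ := Finset.card_eq_two.mp hw2
    have hwa : G.Adj w a := by
      rw [← SimpleGraph.mem_neighborFinset, hN]; simp
    have hwb : G.Adj w b := by
      rw [← SimpleGraph.mem_neighborFinset, hN]; simp
    have hnab : ¬ G.Adj a b := fun h => notCF3 hwa hwb h h3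
    set T : Finset (Fin 8) := {w, a, b} with hT
    set C : Finset (Fin 8) := univ \ T with hC
    have hTcard : T.card = 3 := by
      rw [hT, card_insert_of_notMem (by simp [hwa.ne, hwb.ne]),
        card_insert_of_notMem (by simp [hab]), card_singleton]
    have hCcard : C.card = 5 := by
      rw [hC, card_sdiff_of_subset (subset_univ _), hTcard]
      simp
    have hCmem : ∀ c ∈ C, c ≠ w ∧ ¬ G.Adj w c ∧ c ≠ a ∧ c ≠ b := by
      intro c hc
      rw [hC, mem_sdiff, hT] at hc
      have h1 := hc.2
      simp only [mem_insert, mem_singleton] at h1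
      push_neg at h1
      refine ⟨h1.1, ?_, h1.2.1, h1.2.2⟩
      intro hadj
      have hmN : c ∈ G.neighborFinset w := (G.mem_neighborFinset w c).mpr hadj
      rw [hN] at hmN
      simp only [mem_insert, mem_singleton] at hmN
      tauto
    have hwC : w ∉ C := by rw [hC, mem_sdiff, hT]; simp
    have cW : ∀ c ∈ C, Gᶜ.Adj w c := fun c hc =>
      (G.compl_adj w c).mpr ⟨fun h => (hCmem c hc).1 h.symm, (hCmem c hc).2.1⟩
    -- every vertex of C has exactly two neighbours inside C
    have hdC : ∀ c ∈ C, (C.filter (fun x => G.Adj c x)).card = 2 := by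
      intro c hc
      by_contra hne2
      rcases Nat.lt_or_ge (C.filter (fun x => G.Adj c x)).card 2 with hlt | hge
      · -- at most 1 inner neighbour: independent 4-set {w,c,x,y}
        have hsplit := Finset.card_filter_add_card_filter_not
          (s := C) (p := fun x => G.Adj c x)
        set m : Finset (Fin 8) := (C.filter (fun x => ¬ G.Adj c x)).erase c with hm
        have hmcard : 3 ≤ m.card := by
          have := Finset.pred_card_le_card_erase
            (s := C.filter (fun x => ¬ G.Adj c x)) (a := c)
          rw [hm]; omega
        obtain ⟨t, hts, htc⟩ := Finset.exists_subset_card_eq hmcard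
        obtain ⟨x, hxt, y, hyt, hxy, hnadj⟩ := triple_nonadj h3 htc
        have hmem : ∀ p ∈ t, p ≠ c ∧ p ∈ C ∧ ¬ G.Adj c p := by
          intro p hp
          have := hts hp
          rw [hm, Finset.mem_erase, Finset.mem_filter] at this
          exact ⟨this.1, this.2.1, this.2.2⟩
        have hx' := hmem x hxt
        have hy' := hmem y hyt
        have cC : ∀ p : Fin 8, p ≠ c → ¬ G.Adj c p → Gᶜ.Adj c p := fun p h1 h2 =>
          (G.compl_adj c p).mpr ⟨fun h => h1 h.symm, h2⟩
        exact notCF4 (cW c hc) (cW x hx'.2.1) (cW y hy'.2.1)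
          (cC x hx'.1 hx'.2.2) (cC y hy'.1 hy'.2.2)
          ((G.compl_adj x y).mpr ⟨hxy, hnadj⟩) h4
      · -- at least 3 inner neighbours: independent 4-set {w,x,y,z}
        have hge3 : 3 ≤ (C.filter (fun x => G.Adj c x)).card := by omega
        obtain ⟨t, hts, htc⟩ := Finset.exists_subset_card_eq hge3
        obtain ⟨x, y, z, hxy, hxz, hyz, hteq⟩ := Finset.card_eq_three.mp htc
        have hmem : ∀ p ∈ t, p ∈ C ∧ G.Adj c p := by
          intro p hp
          have := hts hp
          rw [Finset.mem_filter] at this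
          exact this
        have hx' := hmem x (by rw [hteq]; simp)
        have hy' := hmem y (by rw [hteq]; simp)
        have hz' := hmem z (by rw [hteq]; simp)
        have cA : ∀ p q : Fin 8, G.Adj c p → G.Adj c q → p ≠ q → Gᶜ.Adj p q :=
          fun p q hp hq hne => (G.compl_adj p q).mpr ⟨hne, fun h => notCF3 hp hq h h3⟩
        exact notCF4 (cW x hx'.1) (cW y hy'.1) (cW z hz'.1)
          (cA x y hx'.2 hy'.2 hxy) (cA x z hx'.2 hz'.2 hxz) (cA y z hy'.2 hz'.2 hyz) h4
    -- a and b together have at least 3 neighbours in C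
    set ka : Finset (Fin 8) := C.filter (fun c => G.Adj a c) with hka
    set kb : Finset (Fin 8) := C.filter (fun c => G.Adj b c) with hkb
    have hS : 3 ≤ ka.card + kb.card := by
      by_contra hS
      push_neg at hS
      set Cs : Finset (Fin 8) := C.filter (fun c => ¬ (G.Adj a c ∨ G.Adj b c)) with hCs
      have hCscard : 3 ≤ Cs.card := by
        have hsplit := Finset.card_filter_add_card_filter_not
          (s := C) (p := fun c => G.Adj a c ∨ G.Adj b c)
        have hsub : C.filter (fun c => G.Adj a c ∨ G.Adj b c) ⊆ ka ∪ kb := by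
          intro p hp
          rw [Finset.mem_filter] at hp
          rw [Finset.mem_union, hka, hkb, Finset.mem_filter, Finset.mem_filter]
          tauto
        have := Finset.card_le_card hsub
        have := Finset.card_union_le ka kb
        rw [hCs]; omega
      have hpair : ∀ p ∈ Cs, ∀ q ∈ Cs, p ≠ q → G.Adj p q := by
        intro p hp q hq hne
        rw [hCs, Finset.mem_filter] at hp hq
        push_neg at hp hq
        by_contra hnadj
        have hpC := hCmem p hp.1
        have hqC := hCmem q hq.1
        exact notCF4 ((G.compl_adj a b).mpr ⟨hab, hnab⟩)
          ((G.compl_adj a p).mpr ⟨fun h => hpC.2.2.1 h.symm, hp.2.1⟩)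
          ((G.compl_adj a q).mpr ⟨fun h => hqC.2.2.1 h.symm, hq.2.1⟩)
          ((G.compl_adj b p).mpr ⟨fun h => hpC.2.2.2 h.symm, hp.2.2⟩)
          ((G.compl_adj b q).mpr ⟨fun h => hqC.2.2.2 h.symm, hq.2.2⟩)
          ((G.compl_adj p q).mpr ⟨hne, hnadj⟩) h4
      obtain ⟨t, hts, htc⟩ := Finset.exists_subset_card_eq hCscard
      obtain ⟨x, hxt, y, hyt, hxy, hnadj⟩ := triple_nonadj h3 htc
      exact hnadj (hpair x (hts hxt) y (hts hyt) hxy)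
    -- degree lower bounds
    have hdega : ka.card + 1 ≤ G.degree a := by
      have hsub : insert w ka ⊆ G.neighborFinset a := by
        intro p hp
        rw [Finset.mem_insert] at hp
        rw [SimpleGraph.mem_neighborFinset]
        rcases hp with rfl | hp
        · exact hwa.symm
        · rw [hka, Finset.mem_filter] at hp; exact hp.2
      have hwka : w ∉ ka := fun h => hwC (Finset.mem_filter.mp h).1
      calc ka.card + 1 = (insert w ka).card := (Finset.card_insert_of_notMem hwka).symm
      _ ≤ _ := Finset.card_le_card hsub
    have hdegb : kb.card + 1 ≤ G.degree b := by
      have hsub : insert w kb ⊆ G.neighborFinset b := by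
        intro p hp
        rw [Finset.mem_insert] at hp
        rw [SimpleGraph.mem_neighborFinset]
        rcases hp with rfl | hp
        · exact hwb.symm
        · rw [hkb, Finset.mem_filter] at hp; exact hp.2
      have hwkb : w ∉ kb := fun h => hwC (Finset.mem_filter.mp h).1
      calc kb.card + 1 = (insert w kb).card := (Finset.card_insert_of_notMem hwkb).symm
      _ ≤ _ := Finset.card_le_card hsub
    have hdegc : ∀ c ∈ C, 2 + (({a,b} : Finset (Fin 8)).filter (fun x => G.Adj c x)).card ≤ G.degree c := by
      intro c hc
      have hsub : (C.filter (fun x => G.Adj c x)) ∪ (({a,b} : Finset (Fin 8)).filter (fun x => G.Adj c x))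
          ⊆ G.neighborFinset c := by
        intro p hp
        rw [Finset.mem_union, Finset.mem_filter, Finset.mem_filter] at hp
        rw [SimpleGraph.mem_neighborFinset]
        rcases hp with hp | hp
        · exact hp.2
        · exact hp.2
      have hdisj : Disjoint (C.filter (fun x => G.Adj c x))
          (({a,b} : Finset (Fin 8)).filter (fun x => G.Adj c x)) := by
        rw [Finset.disjoint_left]
        intro p hp hq
        have hpC := (Finset.mem_filter.mp hp).1
        have hpab := (Finset.mem_filter.mp hq).1
        have hcm := hCmem p hpC
        simp only [mem_insert, mem_singleton] at hpab
        rcases hpab with rfl | rfl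
        · exact hcm.2.2.1 rfl
        · exact hcm.2.2.2 rfl
      calc 2 + (({a,b} : Finset (Fin 8)).filter (fun x => G.Adj c x)).card
          = ((C.filter (fun x => G.Adj c x)) ∪ (({a,b} : Finset (Fin 8)).filter (fun x => G.Adj c x))).card := by
            rw [Finset.card_union_of_disjoint hdisj, hdC c hc]
      _ ≤ _ := Finset.card_le_card hsub
    -- double counting
    have hdouble : ∑ c ∈ C, (({a,b} : Finset (Fin 8)).filter (fun x => G.Adj c x)).card = ka.card + kb.card := by
      have h1 : ∀ c ∈ C, (({a,b} : Finset (Fin 8)).filter (fun x => G.Adj c x)).card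
          = ∑ x ∈ ({a,b} : Finset (Fin 8)), if G.Adj c x then 1 else 0 := by
        intro c _
        rw [Finset.card_filter]
      rw [Finset.sum_congr rfl h1, Finset.sum_comm]
      have hax : a ∉ ({b} : Finset (Fin 8)) := by simp [hab]
      rw [show ({a,b} : Finset (Fin 8)) = insert a {b} from rfl,
        Finset.sum_insert hax, Finset.sum_singleton]
      have hca : ∑ c ∈ C, (if G.Adj c a then 1 else 0) = ka.card := by
        rw [hka, Finset.card_filter]
        exact Finset.sum_congr rfl (fun c _ => if_congr (G.adj_comm _ _) rfl rfl)
      have hcb : ∑ c ∈ C, (if G.Adj c b then 1 else 0) = kb.card := by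
        rw [hkb, Finset.card_filter]
        exact Finset.sum_congr rfl (fun c _ => if_congr (G.adj_comm _ _) rfl rfl)
      rw [hca, hcb]
    have hsumC : 10 + (ka.card + kb.card) ≤ ∑ c ∈ C, G.degree c := by
      calc 10 + (ka.card + kb.card)
          = ∑ c ∈ C, (2 + (({a,b} : Finset (Fin 8)).filter (fun x => G.Adj c x)).card) := by
            rw [Finset.sum_add_distrib, hdouble, Finset.sum_const, hCcard, smul_eq_mul]
      _ ≤ _ := Finset.sum_le_sum hdegc
    have hsplitsum : ∑ c ∈ C, G.degree c + ∑ c ∈ T, G.degree c = ∑ v, G.degree v := by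
      rw [hC]
      exact Finset.sum_sdiff (Finset.subset_univ T)
    have hsumT : ∑ c ∈ T, G.degree c = G.degree w + (G.degree a + G.degree b) := by
      rw [hT, show ({w,a,b} : Finset (Fin 8)) = insert w {a, b} from rfl,
        Finset.sum_insert (by simp [hwa.ne, hwb.ne]),
        show ({a,b} : Finset (Fin 8)) = insert a {b} from rfl,
        Finset.sum_insert (by simp [hab]), Finset.sum_singleton]
    omega


def Rg : SimpleGraph (Fin 8) where
  Adj x y := (y = x + 1 ∨ x = y + 1) ∨
    ((x = 2 ∧ y = 6) ∨ (x = 6 ∧ y = 2) ∨ (x = 3 ∧ y = 7) ∨ (x = 7 ∧ y = 3))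
  symm := ⟨fun x y h => by tauto⟩
  loopless := ⟨by intro x; fin_cases x <;> decide⟩

def Pg : SimpleGraph (Fin 8) where
  Adj x y := ((x = 0 ∧ y = 4) ∨ (x = 1 ∧ y = 5)) ∨ ((y = 0 ∧ x = 4) ∨ (y = 1 ∧ x = 5))
  symm := ⟨fun x y h => by tauto⟩
  loopless := ⟨by intro x; fin_cases x <;> decide⟩

instance : DecidableRel Rg.Adj := fun x y =>
  inferInstanceAs (Decidable ((y = x + 1 ∨ x = y + 1) ∨
    ((x = 2 ∧ y = 6) ∨ (x = 6 ∧ y = 2) ∨ (x = 3 ∧ y = 7) ∨ (x = 7 ∧ y = 3))))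

instance : DecidableRel Pg.Adj := fun x y =>
  inferInstanceAs (Decidable (((x = 0 ∧ y = 4) ∨ (x = 1 ∧ y = 5)) ∨
    ((y = 0 ∧ x = 4) ∨ (y = 1 ∧ x = 5))))

def Bg : SimpleGraph (Fin 8) := (Rg ⊔ Pg)ᶜ

instance : DecidableRel Bg.Adj := inferInstanceAs (DecidableRel ((Rg ⊔ Pg)ᶜ).Adj)



theorem statement18 :
    (∀ R B P : SimpleGraph (Fin 8), IsRBP R B P → IsMatchingGraph P →
      3 ≤ P.edgeSet.ncard →
      ¬ (R ⊔ P).CliqueFree 3 ∨ ¬ (B ⊔ P).CliqueFree 4) ∧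
    (∃ R B P : SimpleGraph (Fin 8), IsRBP R B P ∧ IsMatchingGraph P ∧
      P.edgeSet.ncard = 2 ∧ (R ⊔ P).CliqueFree 3 ∧ (B ⊔ P).CliqueFree 4) := by
  constructor
  · rintro R B P ⟨htop, -, -, -⟩ - hcard
    by_contra hcon
    rw [not_or, not_not, not_not] at hcon
    obtain ⟨h3, h4⟩ := hcon
    classical
    letI : DecidableRel (R ⊔ P).Adj := Classical.decRel _
    letI : DecidableRel P.Adj := Classical.decRel _
    letI : DecidableRel ((R ⊔ P) \ P).Adj := Classical.decRel _
    have hPG : P ≤ R ⊔ P := le_sup_right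
    have hBadj : ∀ x y : Fin 8, x ≠ y → ¬ (R ⊔ P).Adj x y → B.Adj x y := by
      intro x y hne hnadj
      have htop' : (R ⊔ B ⊔ P).Adj x y := by rw [htop]; exact hne
      rcases htop' with (hR | hB) | hP
      · exact absurd (Or.inl hR) hnadj
      · exact hB
      · exact absurd (Or.inr hP) hnadj
    have hGc4 : (R ⊔ P)ᶜ.CliqueFree 4 := by
      refine h4.anti ?_
      intro x y hxy
      rw [compl_adj] at hxy
      exact Or.inl (hBadj x y hxy.1 hxy.2)
    have hG'3 : ((R ⊔ P) \ P).CliqueFree 3 := h3.anti sdiff_le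
    have hG'4 : ((R ⊔ P) \ P)ᶜ.CliqueFree 4 := by
      refine h4.anti ?_
      intro x y hxy
      rw [compl_adj] at hxy
      obtain ⟨hne, hnadj⟩ := hxy
      by_cases hGxy : (R ⊔ P).Adj x y
      · have hPxy : P.Adj x y := by
          by_contra hP
          exact hnadj ⟨hGxy, hP⟩
        exact Or.inr hPxy
      · exact Or.inl (hBadj x y hne hGxy)
    have e1 : 10 ≤ ((R ⊔ P) \ P).edgeSet.ncard := by
      have h10 := ten_le_edges _ hG'3 hG'4
      rwa [← Set.ncard_coe_finset, SimpleGraph.coe_edgeFinset] at h10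
    have e2 : (R ⊔ P).edgeSet.ncard ≤ 12 := by
      have hsum := (R ⊔ P).sum_degrees_eq_twice_card_edges
      have h24 : ∑ v, (R ⊔ P).degree v ≤ ∑ _v : Fin 8, 3 :=
        Finset.sum_le_sum (fun v _ => deg_le_three _ h3 hGc4 v)
      simp only [Finset.sum_const, Finset.card_univ, Fintype.card_fin, smul_eq_mul] at h24
      rw [← Set.ncard_coe_finset, SimpleGraph.coe_edgeFinset] at hsum
      omega
    have e3 : ((R ⊔ P) \ P).edgeSet.ncard
        = (R ⊔ P).edgeSet.ncard - P.edgeSet.ncard := by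
      rw [SimpleGraph.edgeSet_sdiff, Set.ncard_diff (SimpleGraph.edgeSet_mono hPG)]
    have e5 : P.edgeSet.ncard ≤ (R ⊔ P).edgeSet.ncard :=
      Set.ncard_le_ncard (SimpleGraph.edgeSet_mono hPG) (Set.toFinite _)
    omega
  · refine ⟨Rg, Bg, Pg, ⟨?_, ?_, ?_, ?_⟩, ?_, ?_, ?_, ?_⟩
    · ext x y
      revert x y
      decide
    · exact (disjoint_compl_right).mono_left le_sup_left
    · rw [disjoint_iff]
      ext x y
      revert x y
      decide
    · exact (disjoint_compl_left).mono_right le_sup_right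
    · intro v w w'
      revert v w w'
      decide
    · rw [← SimpleGraph.coe_edgeFinset, Set.ncard_coe_finset]
      decide
    · decide
    · decide
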